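/- Let μ be a probability measure on ℝ² with continuous marginal cumulative distribution functions F_X and F_Y and support S. If the topological interior of S is nonempty, then there do not exist functions f : ℝ → ℝ and g : ℝ → ℝ and a constant c such that F_X(x)·F_Y(y) − f(x) − g(y) = c for all (x,y) ∈ S. -/

import Mathlib

open MeasureTheory Set

theorem stmt_15
    (μ : Measure (ℝ × ℝ)) [IsProbabilityMeasure μ]
    (FX FY : ℝ → ℝ)
    (hFX : ∀ x, FX x = (μ (Iic x ×ˢ (univ : Set ℝ))).toReal)
    (hFY : ∀ y, FY y = (μ ((univ : Set ℝ) ×ˢ Iic y)).toReal)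
    (hFXcont : Continuous FX) (hFYcont : Continuous FY)
    (S : Set (ℝ × ℝ))
    (hSclosed : IsClosed S) (hSfull : μ Sᶜ = 0)
    (hSmin : ∀ T : Set (ℝ × ℝ), IsClosed T → μ Tᶜ = 0 → S ⊆ T)
    (hint : (interior S).Nonempty) :
    ¬ ∃ (f g : ℝ → ℝ) (c : ℝ), ∀ p ∈ S, FX p.1 * FY p.2 - f p.1 - g p.2 = c := by
  rintro ⟨f, g, c, hfg⟩
  obtain ⟨p, hp⟩ := hint
  obtain ⟨r, hr, hball⟩ := Metric.isOpen_iff.mp isOpen_interior p hp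
  set s := r / 2 with hs
  have hs0 : 0 < s := by positivity
  have hballS : Metric.ball p r ⊆ S := hball.trans interior_subset
  -- the small ball has positive measure
  have hpos : 0 < μ (Metric.ball p s) := by
    rcases eq_zero_or_pos (μ (Metric.ball p s)) with hz | h
    · exfalso
      have hT : IsClosed (S \ Metric.ball p s) := hSclosed.sdiff Metric.isOpen_ball
      have hTc : μ (S \ Metric.ball p s)ᶜ = 0 := by
        refine measure_mono_null (t := Sᶜ ∪ Metric.ball p s) ?_ ?_
        · intro x hx
          simp only [Set.mem_compl_iff, Set.mem_diff, not_and, not_not] at hx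
          by_cases hxS : x ∈ S
          · exact Or.inr (hx hxS)
          · exact Or.inl hxS
        · exact le_antisymm ((measure_union_le _ _).trans (by simp [hSfull, hz])) (zero_le)
      have := hSmin _ hT hTc (interior_subset hp)
      exact this.2 (Metric.mem_ball_self hs0)
    · exact h
  -- the small ball is a product of intervals
  set x1 := p.1 - s
  set x2 := p.1 + s
  set y1 := p.2 - s
  set y2 := p.2 + s
  have hballprod : Metric.ball p s = Ioo x1 x2 ×ˢ Ioo y1 y2 := by
    rw [← ball_prod_same, Real.ball_eq_Ioo, Real.ball_eq_Ioo]
  -- marginals strictly increase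
  have hstep : ∀ a b : ℝ, a ≤ b →
      μ (Iic a ×ˢ (univ : Set ℝ)) + μ (Ioc a b ×ˢ (univ : Set ℝ)) = μ (Iic b ×ˢ (univ : Set ℝ)) := by
    intro a b hab
    rw [← measure_union ?_ ((measurableSet_Ioc.prod MeasurableSet.univ))]
    · rw [← Set.union_prod, Set.Iic_union_Ioc_eq_Iic hab]
    · exact Set.disjoint_prod.mpr (Or.inl (Set.Iic_disjoint_Ioc le_rfl))
  have hstepY : ∀ a b : ℝ, a ≤ b →
      μ ((univ : Set ℝ) ×ˢ Iic a) + μ ((univ : Set ℝ) ×ˢ Ioc a b) = μ ((univ : Set ℝ) ×ˢ Iic b) := by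
    intro a b hab
    rw [← measure_union ?_ (MeasurableSet.univ.prod measurableSet_Ioc)]
    · rw [← Set.prod_union, Set.Iic_union_Ioc_eq_Iic hab]
    · exact Set.disjoint_prod.mpr (Or.inr (Set.Iic_disjoint_Ioc le_rfl))
  have hx12 : x1 ≤ x2 := by simp only [x1, x2]; linarith
  have hy12 : y1 ≤ y2 := by simp only [y1, y2]; linarith
  have hposX : 0 < μ (Ioc x1 x2 ×ˢ (univ : Set ℝ)) :=
    lt_of_lt_of_le hpos (by
      rw [hballprod]
      exact measure_mono (Set.prod_mono Set.Ioo_subset_Ioc_self (Set.subset_univ _)))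
  have hposY : 0 < μ ((univ : Set ℝ) ×ˢ Ioc y1 y2) :=
    lt_of_lt_of_le hpos (by
      rw [hballprod]
      exact measure_mono (Set.prod_mono (Set.subset_univ _) Set.Ioo_subset_Ioc_self))
  have hFXlt : FX x1 < FX x2 := by
    rw [hFX, hFX]
    have h := hstep x1 x2 hx12
    have h1 : μ (Iic x1 ×ˢ (univ : Set ℝ)) ≠ ⊤ := measure_ne_top μ _
    have h2 : μ (Ioc x1 x2 ×ˢ (univ : Set ℝ)) ≠ ⊤ := measure_ne_top μ _
    have := ENNReal.toReal_add h1 h2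
    rw [h] at this
    rw [this]
    have := ENNReal.toReal_pos hposX.ne' h2
    linarith
  have hFYlt : FY y1 < FY y2 := by
    rw [hFY, hFY]
    have h := hstepY y1 y2 hy12
    have h1 : μ ((univ : Set ℝ) ×ˢ Iic y1) ≠ ⊤ := measure_ne_top μ _
    have h2 : μ ((univ : Set ℝ) ×ˢ Ioc y1 y2) ≠ ⊤ := measure_ne_top μ _
    have := ENNReal.toReal_add h1 h2
    rw [h] at this
    rw [this]
    have := ENNReal.toReal_pos hposY.ne' h2
    linarith
  -- four corner points are in S
  have hmem : ∀ a b : ℝ, (a = x1 ∨ a = x2) → (b = y1 ∨ b = y2) → (a, b) ∈ S := by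
    intro a b ha hb
    apply hballS
    rw [Metric.mem_ball]
    have hda : |a - p.1| = s := by
      rcases ha with h | h
      · rw [h, show p.1 - s - p.1 = -s by ring, abs_neg, abs_of_nonneg hs0.le]
      · rw [h, show p.1 + s - p.1 = s by ring, abs_of_nonneg hs0.le]
    have hdb : |b - p.2| = s := by
      rcases hb with h | h
      · rw [h, show p.2 - s - p.2 = -s by ring, abs_neg, abs_of_nonneg hs0.le]
      · rw [h, show p.2 + s - p.2 = s by ring, abs_of_nonneg hs0.le]
    rw [Prod.dist_eq]
    simp only [Real.dist_eq]
    rw [hda, hdb]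
    simpa using (by linarith : s < r)
  have h11 := hfg (x1, y1) (hmem _ _ (Or.inl rfl) (Or.inl rfl))
  have h12 := hfg (x1, y2) (hmem _ _ (Or.inl rfl) (Or.inr rfl))
  have h21 := hfg (x2, y1) (hmem _ _ (Or.inr rfl) (Or.inl rfl))
  have h22 := hfg (x2, y2) (hmem _ _ (Or.inr rfl) (Or.inr rfl))
  simp only at h11 h12 h21 h22
  have key : (FX x2 - FX x1) * (FY y2 - FY y1) = 0 := by
    linear_combination h11 - h12 - h21 + h22
  nlinarith [mul_pos (sub_pos.mpr hFXlt) (sub_pos.mpr hFYlt)]
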